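/- For all f, g ∈ L¹(ℝ), the function (τ, y) ↦ sgn(τ) f(y − τ) g(y + τ) is integrable on ℝ², and −(1/2)∫_ℝ sgn(τ) (∫_ℝ f(y − τ) g(y + τ) dy) dτ = −(1/4)∫_{ℝ²} sgn(y₂ − y₁) f(y₁) g(y₂) dy₁ dy₂ = −(1/2)∫_ℝ (∂⁻¹f)(y) g(y) dy. -/

import Mathlib

open MeasureTheory Filter
open scoped ENNReal

/-- The antiderivative operator
`(∂⁻¹u)(y) := (1/2)(∫_{−∞}^{y} u − ∫_{y}^{+∞} u)`. -/
noncomputable def Dinv (u : ℝ → ℝ) (y : ℝ) : ℝ :=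
  (1/2) * ((∫ x in Set.Iic y, u x) - (∫ x in Set.Ici y, u x))

lemma measurable_realSign : Measurable Real.sign := by
  have h : Real.sign = fun r : ℝ => if r < 0 then (-1 : ℝ) else if 0 < r then 1 else 0 := by
    funext r; rfl
  rw [h]
  exact Measurable.ite (measurableSet_lt measurable_id measurable_const) measurable_const
    (Measurable.ite (measurableSet_lt measurable_const measurable_id) measurable_const
      measurable_const)

lemma norm_realSign_le (x : ℝ) : ‖Real.sign x‖ ≤ 1 := by
  rcases lt_trichotomy x 0 with h | h | h
  · simp [Real.sign_of_neg h]
  · simp [h]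
  · simp [Real.sign_of_pos h]

lemma realSign_two_mul (x : ℝ) : Real.sign (2 * x) = Real.sign x := by
  rcases lt_trichotomy x 0 with h | h | h
  · rw [Real.sign_of_neg h, Real.sign_of_neg (by linarith)]
  · simp [h]
  · rw [Real.sign_of_pos h, Real.sign_of_pos (by linarith)]

lemma smul_measure_prod {α β : Type*} [MeasurableSpace α] [MeasurableSpace β]
    (c : ℝ≥0∞) (μ : Measure α) (ν : Measure β) [SigmaFinite ν] :
    (c • μ).prod ν = c • (μ.prod ν) := by
  ext s hs
  simp [Measure.prod_apply hs, lintegral_smul_measure]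

/-- **Explicit formula for the solution of the homological equation.**
For `f, g ∈ L¹(ℝ)`, the function `(τ, y) ↦ sgn(τ) f(y−τ) g(y+τ)` is integrable on `ℝ²`, and
`−(1/2)∫ sgn(τ) (∫ f(y−τ)g(y+τ) dy) dτ = −(1/4)∫∫ sgn(y₂−y₁) f(y₁) g(y₂) dy₁ dy₂
  = −(1/2)∫ (∂⁻¹f)(y) g(y) dy`. -/
theorem homological_integral_formula (f g : ℝ → ℝ)
    (hf : Integrable f) (hg : Integrable g) :
    Integrable (fun p : ℝ × ℝ => Real.sign p.1 * (f (p.2 - p.1) * g (p.2 + p.1))) ∧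
    (-(1/2) * ∫ τ : ℝ, Real.sign τ * ∫ y : ℝ, f (y - τ) * g (y + τ)) =
      (-(1/4) * ∫ p : ℝ × ℝ, Real.sign (p.2 - p.1) * f p.1 * g p.2) ∧
    (-(1/4) * ∫ p : ℝ × ℝ, Real.sign (p.2 - p.1) * f p.1 * g p.2) =
      (-(1/2) * ∫ y : ℝ, Dinv f y * g y) := by
  have hvol : (volume : Measure (ℝ × ℝ)) = (volume : Measure ℝ).prod volume :=
    Measure.volume_eq_prod ℝ ℝ
  set T : ℝ × ℝ → ℝ × ℝ := fun p => (p.2 - p.1, p.2 + p.1) with hTdef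
  have hTmeas : Measurable T :=
    (measurable_snd.sub measurable_fst).prodMk (measurable_snd.add measurable_fst)
  -- the pushforward of volume under T is (1/2) • volume
  have hmap : Measure.map T (volume : Measure (ℝ × ℝ)) = ENNReal.ofReal 2⁻¹ • volume := by
    have hcomp : T = (fun z : ℝ × ℝ => (z.1, z.1 + z.2)) ∘ ((Prod.swap : ℝ × ℝ → ℝ × ℝ) ∘
        ((Prod.map (fun x : ℝ => 2 * x) (id : ℝ → ℝ)) ∘ (fun z : ℝ × ℝ => (z.1, z.2 - z.1)))) := by
      funext p
      show (p.2 - p.1, p.2 + p.1) = _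
      simp only [Function.comp_apply, Prod.map, Prod.swap, id]
      congr 1
      ring
    have m1 : Measurable (fun z : ℝ × ℝ => (z.1, z.2 - z.1)) :=
      measurable_fst.prodMk (measurable_snd.sub measurable_fst)
    have m2 : Measurable (Prod.map (fun x : ℝ => 2 * x) (id : ℝ → ℝ)) :=
      (measurable_const_mul 2).prodMap measurable_id
    have m3 : Measurable (Prod.swap : ℝ × ℝ → ℝ × ℝ) := measurable_swap
    have m4 : Measurable (fun z : ℝ × ℝ => (z.1, z.1 + z.2)) :=
      measurable_fst.prodMk (measurable_fst.add measurable_snd)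
    have s1 : Measure.map (fun z : ℝ × ℝ => (z.1, z.2 - z.1)) (volume : Measure (ℝ × ℝ))
        = volume := by
      rw [hvol]; exact (measurePreserving_prod_sub (volume : Measure ℝ) volume).map_eq
    have s2 : Measure.map (Prod.map (fun x : ℝ => 2 * x) (id : ℝ → ℝ))
        (volume : Measure (ℝ × ℝ)) = ENNReal.ofReal 2⁻¹ • volume := by
      rw [hvol, ← Measure.map_prod_map _ _ (measurable_const_mul 2) measurable_id,
        Measure.map_id]
      have : Measure.map (fun x : ℝ => 2 * x) volume = ENNReal.ofReal |(2 : ℝ)⁻¹| • volume :=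
        Real.map_volume_mul_left (two_ne_zero)
      rw [this, smul_measure_prod]
      congr 1
      rw [abs_of_pos (by norm_num : (0:ℝ) < 2⁻¹)]
    have s3 : Measure.map (Prod.swap : ℝ × ℝ → ℝ × ℝ) (volume : Measure (ℝ × ℝ)) = volume := by
      rw [hvol]; exact Measure.measurePreserving_swap.map_eq
    have s4 : Measure.map (fun z : ℝ × ℝ => (z.1, z.1 + z.2)) (volume : Measure (ℝ × ℝ))
        = volume := by
      rw [hvol]; exact (measurePreserving_prod_add (volume : Measure ℝ) volume).map_eq
    rw [hcomp, ← Measure.map_map m4 (m3.comp (m2.comp m1)),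
      ← Measure.map_map m3 (m2.comp m1), ← Measure.map_map m2 m1, s1, s2,
      Measure.map_smul, Measure.map_smul, s3, s4]
  -- the basic integrable product
  have hfg : Integrable (fun p : ℝ × ℝ => f p.1 * g p.2) (volume : Measure (ℝ × ℝ)) := by
    rw [hvol]; exact hf.mul_prod hg
  have hmapne : (ENNReal.ofReal 2⁻¹ : ℝ≥0∞) ≠ ⊤ := ENNReal.ofReal_ne_top
  have hfgmap : Integrable (fun p : ℝ × ℝ => f p.1 * g p.2) (Measure.map T volume) := by
    rw [hmap]; exact hfg.smul_measure hmapne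
  have hcompI : Integrable (fun p : ℝ × ℝ => f (p.2 - p.1) * g (p.2 + p.1))
      (volume : Measure (ℝ × ℝ)) := by
    have := (integrable_map_measure hfgmap.1 hTmeas.aemeasurable).mp hfgmap
    simpa [Function.comp_def, hTdef] using this
  -- Part 1: the integrability statement
  have hsgn1 : AEStronglyMeasurable (fun p : ℝ × ℝ => Real.sign p.1)
      (volume : Measure (ℝ × ℝ)) :=
    (measurable_realSign.comp measurable_fst).aestronglyMeasurable
  have hF : Integrable (fun p : ℝ × ℝ => Real.sign p.1 * (f (p.2 - p.1) * g (p.2 + p.1)))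
      (volume : Measure (ℝ × ℝ)) :=
    hcompI.bdd_mul hsgn1 (Eventually.of_forall fun x => norm_realSign_le _)
  -- integrability of the sign-kernel on the product
  have hH : Integrable (fun p : ℝ × ℝ => Real.sign (p.2 - p.1) * f p.1 * g p.2)
      (volume : Measure (ℝ × ℝ)) := by
    have := hfg.bdd_mul
      ((measurable_realSign.comp (measurable_snd.sub measurable_fst)).aestronglyMeasurable)
      (Eventually.of_forall fun x => norm_realSign_le _)
    simpa [mul_assoc] using this
  -- Part 2: change of variables
  have key2 : (∫ p : ℝ × ℝ, Real.sign (p.2 - p.1) * f p.1 * g p.2)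
      = 2 * ∫ τ : ℝ, Real.sign τ * ∫ y : ℝ, f (y - τ) * g (y + τ) := by
    have hHm : AEStronglyMeasurable (fun p : ℝ × ℝ => Real.sign (p.2 - p.1) * f p.1 * g p.2)
        (Measure.map T volume) := by
      rw [hmap]; exact hH.1.mono_ac Measure.smul_absolutelyContinuous
    have e1 : (∫ p, Real.sign (p.2 - p.1) * f p.1 * g p.2 ∂(Measure.map T volume))
        = ∫ p, Real.sign ((T p).2 - (T p).1) * f (T p).1 * g (T p).2 := by
      exact integral_map hTmeas.aemeasurable hHm
    have e2 : (∫ p, Real.sign (p.2 - p.1) * f p.1 * g p.2 ∂(Measure.map T volume))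
        = 2⁻¹ * ∫ p : ℝ × ℝ, Real.sign (p.2 - p.1) * f p.1 * g p.2 := by
      rw [hmap, integral_smul_measure, ENNReal.toReal_ofReal (by norm_num : (0:ℝ) ≤ 2⁻¹)]
      simp
    have e3 : (fun p : ℝ × ℝ => Real.sign ((T p).2 - (T p).1) * f (T p).1 * g (T p).2)
        = fun p : ℝ × ℝ => Real.sign p.1 * (f (p.2 - p.1) * g (p.2 + p.1)) := by
      funext p
      have harg : (T p).2 - (T p).1 = 2 * p.1 := by simp [hTdef]; ring
      rw [harg, realSign_two_mul]
      show Real.sign p.1 * f (p.2 - p.1) * g (p.2 + p.1) = _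
      ring
    have e4 : (∫ p : ℝ × ℝ, Real.sign p.1 * (f (p.2 - p.1) * g (p.2 + p.1)))
        = ∫ τ : ℝ, Real.sign τ * ∫ y : ℝ, f (y - τ) * g (y + τ) := by
      rw [hvol]
      rw [integral_prod _ (hvol ▸ hF)]
      refine integral_congr_ae (Eventually.of_forall fun τ => ?_)
      exact integral_const_mul (Real.sign τ) fun y => f (y - τ) * g (y + τ)
    have := e1.symm.trans e2
    rw [e3, e4] at this
    linarith [this]
  -- Part 3: Fubini and the antiderivative
  have inner3 : ∀ b : ℝ, (∫ y₁ : ℝ, Real.sign (b - y₁) * f y₁) = 2 * Dinv f b := by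
    intro b
    have hint : Integrable (fun y₁ : ℝ => Real.sign (b - y₁) * f y₁) :=
      hf.bdd_mul ((measurable_realSign.comp
        (measurable_const.sub measurable_id)).aestronglyMeasurable)
        (Eventually.of_forall fun x => norm_realSign_le _)
    have e1 : (∫ y₁ in Set.Iio b, Real.sign (b - y₁) * f y₁) = ∫ y₁ in Set.Iio b, f y₁ := by
      refine setIntegral_congr_fun measurableSet_Iio fun x hx => ?_
      rw [Real.sign_of_pos (sub_pos.mpr hx), one_mul]
    have e2 : (∫ y₁ in Set.Ici b, Real.sign (b - y₁) * f y₁)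
        = ∫ y₁ in Set.Ioi b, Real.sign (b - y₁) * f y₁ :=
      (setIntegral_congr_set (Ioi_ae_eq_Ici (a := b))).symm
    have e3 : (∫ y₁ in Set.Ioi b, Real.sign (b - y₁) * f y₁) = ∫ y₁ in Set.Ioi b, (-f y₁) := by
      refine setIntegral_congr_fun measurableSet_Ioi fun x hx => ?_
      rw [Real.sign_of_neg (sub_neg.mpr hx)]
      ring
    have e4 : (∫ y₁ in Set.Iio b, f y₁) = ∫ y₁ in Set.Iic b, f y₁ :=
      setIntegral_congr_set (Iio_ae_eq_Iic (a := b))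
    have e5 : (∫ y₁ in Set.Ioi b, f y₁) = ∫ y₁ in Set.Ici b, f y₁ :=
      setIntegral_congr_set (Ioi_ae_eq_Ici (a := b))
    have hsplit := intervalIntegral.integral_Iio_add_Ici (hint.integrableOn) (hint.integrableOn) (b := b)
    rw [e1, e2, e3, integral_neg, e4, e5] at hsplit
    rw [← hsplit, Dinv]
    ring
  have key3 : (∫ p : ℝ × ℝ, Real.sign (p.2 - p.1) * f p.1 * g p.2)
      = 2 * ∫ y : ℝ, Dinv f y * g y := by
    have h1 : (∫ p : ℝ × ℝ, Real.sign (p.2 - p.1) * f p.1 * g p.2)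
        = ∫ y₂ : ℝ, ∫ y₁ : ℝ, Real.sign (y₂ - y₁) * f y₁ * g y₂ := by
      rw [hvol]
      exact integral_prod_symm _ (hvol ▸ hH)
    rw [h1]
    have h2 : ∀ y₂ : ℝ, (∫ y₁ : ℝ, Real.sign (y₂ - y₁) * f y₁ * g y₂)
        = 2 * Dinv f y₂ * g y₂ := by
      intro y₂
      rw [integral_mul_const, inner3]
    calc (∫ y₂ : ℝ, ∫ y₁ : ℝ, Real.sign (y₂ - y₁) * f y₁ * g y₂)
        = ∫ y₂ : ℝ, 2 * (Dinv f y₂ * g y₂) := by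
          refine integral_congr_ae (Eventually.of_forall fun y₂ => ?_)
          simpa [mul_assoc] using h2 y₂
      _ = 2 * ∫ y : ℝ, Dinv f y * g y := integral_const_mul _ _
  refine ⟨hF, ?_, ?_⟩
  · rw [key2]; ring
  · rw [key3]; ring
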